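/- Let σ, τ be coprime positive integers and R > 0. Suppose there exist φ₁, φ₂ ∈ [0, R) and integers 0 ≤ ℓ₁, ℓ₂ ≤ ⌈σ/2⌉−1, 0 ≤ k₁, k₂ ≤ ⌈τ/2⌉−1 with φ₁ = φ_σ + ℓ₁·2R/σ = φ_τ + k₁·2R/τ and φ₂ = 2R/σ − φ_σ + ℓ₂·2R/σ = 2R/τ − φ_τ + k₂·2R/τ for some φ_σ, φ_τ ≥ 0. Then this leads to a contradiction; i.e., if Φ_{σ,1} ∩ Φ_{τ,1} ≠ ∅ then Φ_{σ,2} ∩ Φ_{τ,2} = ∅ (assuming the pairs of sets do not coincide). -/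

import Mathlib

theorem candidate_sets_lemma2
    (σ τ : ℕ) (hσ : 0 < σ) (hτ : 0 < τ) (hcop : Nat.Coprime σ τ)
    (R : ℝ) (hR : 0 < R) (φσ φτ : ℝ) (hφσ : 0 ≤ φσ) (hφτ : 0 ≤ φτ)
    (φ₁ φ₂ : ℝ) (hφ₁ : φ₁ ∈ Set.Ico 0 R) (hφ₂ : φ₂ ∈ Set.Ico 0 R)
    (ℓ₁ ℓ₂ k₁ k₂ : ℕ)
    (hℓ₁ : ℓ₁ ≤ (σ + 1) / 2 - 1) (hℓ₂ : ℓ₂ ≤ (σ + 1) / 2 - 1)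
    (hk₁ : k₁ ≤ (τ + 1) / 2 - 1) (hk₂ : k₂ ≤ (τ + 1) / 2 - 1)
    (h1σ : φ₁ = φσ + ℓ₁ * (2 * R / σ)) (h1τ : φ₁ = φτ + k₁ * (2 * R / τ))
    (h2σ : φ₂ = 2 * R / σ - φσ + ℓ₂ * (2 * R / σ))
    (h2τ : φ₂ = 2 * R / τ - φτ + k₂ * (2 * R / τ)) :
    False := by
  have hσR : (σ : ℝ) ≠ 0 := Nat.cast_ne_zero.mpr hσ.ne'
  have hτR : (τ : ℝ) ≠ 0 := Nat.cast_ne_zero.mpr hτ.ne'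
  -- sum identity
  have hsumσ : φ₁ + φ₂ = ((1 + ℓ₁ + ℓ₂ : ℕ) : ℝ) * (2 * R / σ) := by
    push_cast; rw [h1σ, h2σ]; ring
  have hsumτ : φ₁ + φ₂ = ((1 + k₁ + k₂ : ℕ) : ℝ) * (2 * R / τ) := by
    push_cast; rw [h1τ, h2τ]; ring
  have key : (1 + ℓ₁ + ℓ₂) * τ = (1 + k₁ + k₂) * σ := by
    have : ((1 + ℓ₁ + ℓ₂ : ℕ) : ℝ) * τ = ((1 + k₁ + k₂ : ℕ) : ℝ) * σ := by
      have h := hsumσ.symm.trans hsumτ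
      field_simp at h
      have h2R : (2*R) ≠ 0 := by positivity
      push_cast
      exact mul_right_cancel₀ h2R (by push_cast at h; linear_combination (2 * R) * h)
    exact_mod_cast this
  -- σ ∣ 1 + ℓ₁ + ℓ₂
  have hdvd : σ ∣ 1 + ℓ₁ + ℓ₂ := by
    have : σ ∣ (1 + ℓ₁ + ℓ₂) * τ := ⟨1 + k₁ + k₂, by linarith [key]⟩
    exact (Nat.Coprime.dvd_of_dvd_mul_right hcop this)
  have hbσ : ℓ₁ + ℓ₂ ≤ σ - 1 := by
    have h2 : (σ + 1) / 2 - 1 ≤ (σ - 1 + 1) / 2 := by omega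
    omega
  have heq : 1 + ℓ₁ + ℓ₂ = σ := by
    have hle : 1 + ℓ₁ + ℓ₂ ≤ σ := by omega
    have := Nat.le_of_dvd (by omega) hdvd
    omega
  have heqτ : 1 + k₁ + k₂ = τ := by
    have := key
    rw [heq] at this
    have := Nat.eq_of_mul_eq_mul_right hσ (by linarith [this] : τ * σ = (1 + k₁ + k₂) * σ)
    omega
  have hfin : φ₁ + φ₂ = 2 * R := by
    rw [hsumσ, heq]; field_simp
  obtain ⟨h1a, h1b⟩ := hφ₁
  obtain ⟨h2a, h2b⟩ := hφ₂
  linarith
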